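/- Every Tychonoff space with Gδ points has property (★): there are operators D and E assigning to each point x and open neighbourhood U of x disjoint regular Gδ sets D(x,U) and E(x,U) with x ∈ D(x,U) ⊆ U, such that for every open V and y ∈ V, if x ∉ V and y ∉ U then D(y,V) ⊆ E(x,U). -/

import Mathlib

def IsRegGDelta {X : Type*} [TopologicalSpace X] (D : Set X) : Prop :=
  ∃ U : ℕ → Set X, (∀ n, IsOpen (U n)) ∧ (∀ n, D ⊆ U n) ∧ D = ⋂ n, closure (U n)

def PropertyStar (X : Type*) [TopologicalSpace X] : Prop :=
  ∃ D E : X → Set X → Set X,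
    (∀ x U, IsOpen U → x ∈ U →
      IsRegGDelta (D x U) ∧ IsRegGDelta (E x U) ∧ Disjoint (D x U) (E x U) ∧
      x ∈ D x U ∧ D x U ⊆ U) ∧
    (∀ x U y V, IsOpen U → x ∈ U → IsOpen V → y ∈ V → x ∉ V → y ∉ U →
      D y V ⊆ E x U)
open Set Topology

-- singleton Gδ in regular space is regular Gδ
lemma singleton_regGDelta {X : Type*} [TopologicalSpace X] [RegularSpace X]
    (x : X) (h : IsGδ ({x} : Set X)) :
    ∃ U : ℕ → Set X, (∀ n, IsOpen (U n)) ∧ (∀ n, ({x} : Set X) ⊆ U n) ∧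
      ({x} : Set X) = ⋂ n, closure (U n) := by
  obtain ⟨G, hGo, hGeq⟩ := h.eq_iInter_nat
  have hxG : ∀ n, x ∈ G n := fun n => by
    have : x ∈ ⋂ n, G n := hGeq ▸ rfl
    exact mem_iInter.1 this n
  have : ∀ n, ∃ W : Set X, W ∈ 𝓝 x ∧ IsClosed W ∧ W ⊆ G n := fun n =>
    exists_mem_nhds_isClosed_subset ((hGo n).mem_nhds (hxG n))
  choose W hWn hWc hWs using this
  refine ⟨fun n => interior (W n), fun n => isOpen_interior, ?_, ?_⟩
  · intro n y hy
    rcases hy with rfl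
    exact mem_interior_iff_mem_nhds.2 (hWn n)
  · apply Subset.antisymm
    · intro y hy
      rcases hy with rfl
      exact mem_iInter.2 fun n => subset_closure (mem_interior_iff_mem_nhds.2 (hWn n))
    · intro y hy
      have : y ∈ ⋂ n, G n := mem_iInter.2 fun n => by
        have := mem_iInter.1 hy n
        have h1 : closure (interior (W n)) ⊆ W n := (hWc n).closure_subset_iff.2 interior_subset
        exact hWs n (h1 this)
      rwa [← hGeq] at this

-- the level set at 1 of real-valued function bounded by 1
lemma levelone_regGDelta {X : Type*} [TopologicalSpace X]
    (g : X → ℝ) (hg : Continuous g) (hle : ∀ z, g z ≤ 1) :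
    ∃ U : ℕ → Set X, (∀ n, IsOpen (U n)) ∧ (∀ n, g ⁻¹' {1} ⊆ U n) ∧
      g ⁻¹' {1} = ⋂ n, closure (U n) := by
  refine ⟨fun n => g ⁻¹' Ioi (1 - 1/(n+1)), fun n => isOpen_Ioi.preimage hg, ?_, ?_⟩
  · intro n z hz
    simp only [mem_preimage, mem_singleton_iff] at hz
    simp only [mem_preimage, mem_Ioi, hz]
    have : (0:ℝ) < 1/(n+1) := by positivity
    linarith
  · apply Subset.antisymm
    · intro z hz
      simp only [mem_preimage, mem_singleton_iff] at hz
      refine mem_iInter.2 fun n => subset_closure ?_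
      simp only [mem_preimage, mem_Ioi, hz]
      have : (0:ℝ) < 1/(n+1) := by positivity
      linarith
    · intro z hz
      have hcl : ∀ n : ℕ, (1 - 1/((n:ℝ)+1)) ≤ g z := by
        intro n
        have h1 : closure (g ⁻¹' Ioi (1 - 1/(n+1))) ⊆ g ⁻¹' Ici (1 - 1/(n+1)) :=
          closure_minimal (preimage_mono Ioi_subset_Ici_self)
            (isClosed_Ici.preimage hg)
        exact h1 (mem_iInter.1 hz n)
      have : (1:ℝ) ≤ g z := by
        have ht : Filter.Tendsto (fun n : ℕ => 1 - 1/((n:ℝ)+1)) Filter.atTop (nhds 1) := by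
          have := tendsto_one_div_add_atTop_nhds_zero_nat (𝕜 := ℝ)
          simpa using Filter.Tendsto.const_sub 1 this
        exact le_of_tendsto ht (Filter.Eventually.of_forall fun n => hcl n)
      exact le_antisymm (hle z) this

theorem stmt_14 {X : Type*} [TopologicalSpace X] [CompletelyRegularSpace X] [T1Space X]
    (hGδ : ∀ x : X, IsGδ ({x} : Set X)) : PropertyStar X := by
  classical
  have key : ∀ x U, IsOpen U → x ∈ U → ∃ A : Set X, IsRegGDelta A ∧ x ∉ A ∧ Uᶜ ⊆ A := by
    intro x U hU hx
    obtain ⟨f, hf, hf0, hf1⟩ := CompletelyRegularSpace.completely_regular x Uᶜ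
      hU.isClosed_compl (by simpa)
    set g : X → ℝ := fun z => (f z : ℝ) with hgdef
    have hg : Continuous g := continuous_subtype_val.comp hf
    have hle : ∀ z, g z ≤ 1 := fun z => (f z).2.2
    obtain ⟨Un, h1, h2, h3⟩ := levelone_regGDelta g hg hle
    refine ⟨g ⁻¹' {1}, ⟨Un, h1, h2, h3⟩, ?_, ?_⟩
    · simp only [mem_preimage, mem_singleton_iff, hgdef, hf0]
      norm_num
    · intro z hz
      have := hf1 hz
      simp only [mem_preimage, mem_singleton_iff, hgdef, this, Pi.one_apply, Set.Icc.coe_one]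
  choose! E hE1 hE2 hE3 using key
  refine ⟨fun x _ => {x}, E, ?_, ?_⟩
  · intro x U hU hx
    refine ⟨singleton_regGDelta x (hGδ x), hE1 x U hU hx, ?_, rfl, singleton_subset_iff.2 hx⟩
    exact disjoint_singleton_left.2 (hE2 x U hU hx)
  · intro x U y V hU hx hV hy hxV hyU
    exact singleton_subset_iff.2 (hE3 x U hU hx hyU)
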